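/- If ε₁ and ε₂ are independent random variables each following a Gumbel distribution with location 0 and scale σ > 0 (CDF F(x) = exp(-exp(-x/σ))), then for any real constants a and b, the probability that a + ε₁ ≥ b + ε₂ equals 1 / (1 + exp(-(a - b)/σ)). -/

import Mathlib

open MeasureTheory Real

namespace GumbelAux

open Filter Set

/-- Auxiliary function `H σ t x = exp (-t * exp (-x/σ))`. -/
noncomputable def H (σ t x : ℝ) : ℝ := Real.exp (-t * Real.exp (-x / σ))

/-- Derivative of `H σ t`. -/
noncomputable def H' (σ t x : ℝ) : ℝ := t / σ * Real.exp (-x / σ) * H σ t x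

lemma H_nonneg (σ t x : ℝ) : 0 ≤ H σ t x := (Real.exp_pos _).le

lemma H_le_one {σ t : ℝ} (ht : 0 ≤ t) (x : ℝ) : H σ t x ≤ 1 := by
  unfold H
  rw [Real.exp_le_one_iff, neg_mul, neg_nonpos]
  exact mul_nonneg ht (Real.exp_pos _).le

lemma H'_nonneg {σ t : ℝ} (hσ : 0 < σ) (ht : 0 ≤ t) (x : ℝ) : 0 ≤ H' σ t x :=
  mul_nonneg (mul_nonneg (div_nonneg ht hσ.le) (Real.exp_pos _).le) (H_nonneg σ t x)

lemma H_continuous (σ t : ℝ) : Continuous (H σ t) := by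
  unfold H; continuity

lemma H'_continuous (σ t : ℝ) : Continuous (H' σ t) := by
  unfold H' H; continuity

lemma H_hasDerivAt (σ t : ℝ) (x : ℝ) : HasDerivAt (H σ t) (H' σ t x) x := by
  have h1 : HasDerivAt (fun x : ℝ => -x / σ) (-1 / σ) x := by
    simpa using ((hasDerivAt_id x).neg.div_const σ)
  have h2 : HasDerivAt (fun x : ℝ => Real.exp (-x / σ)) (Real.exp (-x / σ) * (-1 / σ)) x := h1.exp
  have h3 : HasDerivAt (fun x : ℝ => -t * Real.exp (-x / σ))
      (-t * (Real.exp (-x / σ) * (-1 / σ))) x := h2.const_mul _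
  have h4 := h3.exp
  convert h4 using 1
  · rfl
  unfold H' H
  ring

lemma tendsto_neg_div_atTop {σ : ℝ} (hσ : 0 < σ) :
    Tendsto (fun x : ℝ => -x / σ) atTop atBot := by
  have h := tendsto_neg_atBot_iff.mpr ((tendsto_id (α := ℝ)).atTop_div_const hσ)
  exact h.congr (by intro x; simp [neg_div])

lemma tendsto_neg_div_atBot {σ : ℝ} (hσ : 0 < σ) :
    Tendsto (fun x : ℝ => -x / σ) atBot atTop :=
  (tendsto_neg_atTop_iff.mpr (tendsto_id (α := ℝ))).atTop_div_const hσ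

lemma tendsto_H_atTop (σ t : ℝ) (hσ : 0 < σ) : Tendsto (H σ t) atTop (nhds 1) := by
  have h2 : Tendsto (fun x : ℝ => Real.exp (-x / σ)) atTop (nhds 0) :=
    Real.tendsto_exp_atBot.comp (tendsto_neg_div_atTop hσ)
  have h3 : Tendsto (fun x : ℝ => -t * Real.exp (-x / σ)) atTop (nhds 0) := by
    simpa using h2.const_mul (-t)
  have h4 := (Real.continuous_exp.tendsto 0).comp h3
  rw [Real.exp_zero] at h4
  exact h4

lemma tendsto_H_atBot (σ t : ℝ) (hσ : 0 < σ) (ht : 0 < t) :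
    Tendsto (H σ t) atBot (nhds 0) := by
  have h2 : Tendsto (fun x : ℝ => Real.exp (-x / σ)) atBot atTop :=
    Real.tendsto_exp_atTop.comp (tendsto_neg_div_atBot hσ)
  have h3 : Tendsto (fun x : ℝ => -t * Real.exp (-x / σ)) atBot atBot := by
    have h := tendsto_neg_atBot_iff.mpr (Tendsto.const_mul_atTop ht h2)
    exact h.congr (by intro x; ring_nf)
  exact Real.tendsto_exp_atBot.comp h3

lemma H'_integrable {σ t : ℝ} (hσ : 0 < σ) (ht : 0 < t) : Integrable (H' σ t) := by
  have hc : Continuous (H' σ t) := H'_continuous σ t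
  apply integrable_of_intervalIntegral_norm_bounded (ι := ℕ)
      (a := fun n : ℕ => -(n : ℝ)) (b := fun n : ℕ => (n : ℝ)) (l := atTop) 1
  · intro n
    exact (hc.integrableOn_Ioc)
  · exact tendsto_neg_atBot_iff.mpr tendsto_natCast_atTop_atTop
  · exact tendsto_natCast_atTop_atTop
  · filter_upwards with n
    have heq : (∫ x in (-(n : ℝ))..(n : ℝ), ‖H' σ t x‖) =
        ∫ x in (-(n : ℝ))..(n : ℝ), H' σ t x :=
      intervalIntegral.integral_congr fun x _ => Real.norm_of_nonneg (H'_nonneg hσ ht.le x)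
    rw [heq, intervalIntegral.integral_eq_sub_of_hasDerivAt
        (fun x _ => H_hasDerivAt σ t x) (hc.intervalIntegrable _ _)]
    have h1 := H_le_one (σ := σ) ht.le (n : ℝ)
    have h2 := H_nonneg σ t (-(n : ℝ))
    linarith

lemma H'_integral {σ t : ℝ} (hσ : 0 < σ) (ht : 0 < t) : ∫ x, H' σ t x = 1 := by
  have h := integral_of_hasDerivAt_of_tendsto (fun x => H_hasDerivAt σ t x)
    (H'_integrable hσ ht) (tendsto_H_atBot σ t hσ ht) (tendsto_H_atTop σ t hσ)
  simpa using h

lemma H'_integral_Iic {σ t : ℝ} (hσ : 0 < σ) (ht : 0 < t) (x : ℝ) :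
    ∫ y in Iic x, H' σ t y = H σ t x := by
  rw [integral_Iic_of_hasDerivAt_of_tendsto' (fun y _ => H_hasDerivAt σ t y)
      (H'_integrable hσ ht).integrableOn (tendsto_H_atBot σ t hσ ht)]
  simp

/-- The Gumbel(0,σ) measure defined by its density. -/
noncomputable def gumbelMeasure (σ : ℝ) : Measure ℝ :=
  volume.withDensity (fun x => ENNReal.ofReal (H' σ 1 x))

lemma gumbel_Iic {σ : ℝ} (hσ : 0 < σ) (x : ℝ) :
    gumbelMeasure σ (Iic x) = ENNReal.ofReal (H σ 1 x) := by
  rw [gumbelMeasure, withDensity_apply _ measurableSet_Iic,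
    ← H'_integral_Iic hσ one_pos x,
    ofReal_integral_eq_lintegral_ofReal (H'_integrable hσ one_pos).integrableOn
      (ae_of_all _ fun y => H'_nonneg hσ one_pos.le y)]

lemma gumbel_prob {σ : ℝ} (hσ : 0 < σ) : IsProbabilityMeasure (gumbelMeasure σ) := by
  constructor
  rw [gumbelMeasure, withDensity_apply _ MeasurableSet.univ, Measure.restrict_univ,
    ← ofReal_integral_eq_lintegral_ofReal (H'_integrable hσ one_pos)
      (ae_of_all _ fun y => H'_nonneg hσ one_pos.le y),
    H'_integral hσ one_pos]
  simp

lemma map_eq_gumbel {Ω : Type*} [MeasurableSpace Ω] (μ : Measure Ω) [IsProbabilityMeasure μ]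
    {σ : ℝ} (hσ : 0 < σ) {ε : Ω → ℝ} (hε : Measurable ε)
    (hcdf : ∀ x : ℝ, μ {ω | ε ω ≤ x} = ENNReal.ofReal (Real.exp (-Real.exp (-x / σ)))) :
    μ.map ε = gumbelMeasure σ := by
  have hp : IsProbabilityMeasure (μ.map ε) := Measure.isProbabilityMeasure_map hε.aemeasurable
  have hg : IsProbabilityMeasure (gumbelMeasure σ) := gumbel_prob hσ
  refine Measure.ext_of_Iic (μ.map ε) (gumbelMeasure σ) fun x => ?_
  rw [Measure.map_apply hε measurableSet_Iic, gumbel_Iic hσ x]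
  have : ε ⁻¹' Iic x = {ω | ε ω ≤ x} := rfl
  rw [this, hcdf x]
  congr 1
  simp [H]

end GumbelAux

/-- If ε₁ and ε₂ are independent Gumbel(0,σ) random variables (CDF
`x ↦ exp(-exp(-x/σ))`), then for any reals `a b`,
`P(a + ε₁ ≥ b + ε₂) = 1/(1 + exp(-(a-b)/σ))`. -/
theorem stmt_0 {Ω : Type*} [MeasurableSpace Ω] (μ : Measure Ω) [IsProbabilityMeasure μ]
    (σ : ℝ) (hσ : 0 < σ) (ε₁ ε₂ : Ω → ℝ) (h₁ : Measurable ε₁) (h₂ : Measurable ε₂)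
    (hindep : ProbabilityTheory.IndepFun ε₁ ε₂ μ)
    (hcdf₁ : ∀ x : ℝ, μ {ω | ε₁ ω ≤ x} = ENNReal.ofReal (Real.exp (-Real.exp (-x / σ))))
    (hcdf₂ : ∀ x : ℝ, μ {ω | ε₂ ω ≤ x} = ENNReal.ofReal (Real.exp (-Real.exp (-x / σ))))
    (a b : ℝ) :
    μ {ω | b + ε₂ ω ≤ a + ε₁ ω} = ENNReal.ofReal (1 / (1 + Real.exp (-(a - b) / σ))) := by
  classical
  open GumbelAux Set in
  set c : ℝ := a - b with hc
  set k : ℝ := Real.exp (-c / σ) with hkdef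
  have hk : 0 < k := Real.exp_pos _
  have hmap1 : μ.map ε₁ = gumbelMeasure σ := map_eq_gumbel μ hσ h₁ hcdf₁
  have hmap2 : μ.map ε₂ = gumbelMeasure σ := map_eq_gumbel μ hσ h₂ hcdf₂
  have hgp : IsProbabilityMeasure (gumbelMeasure σ) := gumbel_prob hσ
  have hT : MeasurableSet {p : ℝ × ℝ | p.2 ≤ p.1 + c} :=
    measurableSet_le measurable_snd (measurable_fst.add_const c)
  have hset : {ω | b + ε₂ ω ≤ a + ε₁ ω} =
      (fun ω => (ε₁ ω, ε₂ ω)) ⁻¹' {p : ℝ × ℝ | p.2 ≤ p.1 + c} := by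
    ext ω
    simp only [Set.mem_setOf_eq, Set.mem_preimage, hc]
    constructor <;> intro h <;> linarith
  have hHc : ∀ x : ℝ, H σ 1 (x + c) = H σ k x := by
    intro x
    unfold H
    congr 1
    rw [neg_mul, one_mul, neg_mul]
    congr 1
    rw [hkdef, ← Real.exp_add]
    congr 1
    field_simp
    ring
  rw [hset, ← Measure.map_apply (h₁.prodMk h₂) hT,
    (ProbabilityTheory.indepFun_iff_map_prod_eq_prod_map_map h₁.aemeasurable
      h₂.aemeasurable).mp hindep, hmap1, hmap2, Measure.prod_apply hT]
  have hpre : ∀ x : ℝ, (Prod.mk x ⁻¹' {p : ℝ × ℝ | p.2 ≤ p.1 + c}) = Iic (x + c) := by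
    intro x; rfl
  calc ∫⁻ x, gumbelMeasure σ (Prod.mk x ⁻¹' {p : ℝ × ℝ | p.2 ≤ p.1 + c}) ∂gumbelMeasure σ
      = ∫⁻ x, ENNReal.ofReal (H σ k x) ∂gumbelMeasure σ := by
        apply lintegral_congr
        intro x
        rw [hpre x, gumbel_Iic hσ (x + c), hHc x]
    _ = ∫⁻ x, ENNReal.ofReal (H' σ 1 x) * ENNReal.ofReal (H σ k x) := by
        rw [gumbelMeasure, lintegral_withDensity_eq_lintegral_mul _
          ((H'_continuous σ 1).measurable.ennreal_ofReal)
          ((H_continuous σ k).measurable.ennreal_ofReal)]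
        rfl
    _ = ∫⁻ x, ENNReal.ofReal (1 / (1 + k) * H' σ (1 + k) x) := by
        apply lintegral_congr
        intro x
        rw [← ENNReal.ofReal_mul (H'_nonneg hσ one_pos.le x)]
        congr 1
        unfold H' H
        rw [mul_assoc, ← Real.exp_add]
        have h1k : (1 : ℝ) + k ≠ 0 := by positivity
        have he : (-1) * rexp (-x / σ) + -k * rexp (-x / σ) = -(1 + k) * rexp (-x / σ) := by
          ring
        rw [he]
        field_simp
    _ = ENNReal.ofReal (1 / (1 + k) * 1) := by
        rw [← ofReal_integral_eq_lintegral_ofReal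
          ((H'_integrable hσ (by positivity : (0:ℝ) < 1 + k)).const_mul _)
          (ae_of_all _ fun x => mul_nonneg (by positivity)
            (H'_nonneg hσ (by positivity : (0:ℝ) ≤ 1 + k) x)),
          integral_const_mul, H'_integral hσ (by positivity : (0:ℝ) < 1 + k)]
    _ = ENNReal.ofReal (1 / (1 + Real.exp (-(a - b) / σ))) := by
        rw [mul_one, hkdef, hc]
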